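/- arXiv:1903.04273 — 2 statements merged into one kernel-verified Lean document; each statement's English description precedes it below -/
import Mathlib

section
/- Let W₁, W₂ ⊆ P(ℕ) be classes downward closed under Turing reducibility. Suppose that every problem admitting preservation of W₁ admits preservation of W₂. Then every problem admitting strong preservation of W₁ admits strong preservation of W₂. -/
open Classical in
/-- The characteristic function of a set of naturals. -/
noncomputable def chi (A : Set ℕ) : ℕ → ℕ := fun n => if n ∈ A then 1 else 0

/-- The effective join (Turing join) of two sets of naturals:
`X ⊕ Y = {2n : n ∈ X} ∪ {2n+1 : n ∈ Y}`. -/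
def setJoin (A B : Set ℕ) : Set ℕ :=
  {n | (∃ m ∈ A, n = 2 * m) ∨ (∃ m ∈ B, n = 2 * m + 1)}

/-- The graph of a function `f : ℕ → ℕ`, coded as a set of naturals. -/
def funGraph (f : ℕ → ℕ) : Set ℕ := {m | ∃ n, m = Nat.pair n (f n)}

/-- Partial recursiveness relative to an oracle `g : ℕ → ℕ` (oracle computability). -/
inductive OracleRecursiveIn (g : ℕ → ℕ) : (ℕ →. ℕ) → Prop
  | zero : OracleRecursiveIn g (pure 0)
  | succ : OracleRecursiveIn g Nat.succ
  | left : OracleRecursiveIn g fun n => (Nat.unpair n).1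
  | right : OracleRecursiveIn g fun n => (Nat.unpair n).2
  | oracle : OracleRecursiveIn g g
  | pair {f h : ℕ →. ℕ} : OracleRecursiveIn g f → OracleRecursiveIn g h →
      OracleRecursiveIn g fun n => Nat.pair <$> f n <*> h n
  | comp {f h : ℕ →. ℕ} : OracleRecursiveIn g f → OracleRecursiveIn g h →
      OracleRecursiveIn g fun n => h n >>= f
  | prec {f h : ℕ →. ℕ} : OracleRecursiveIn g f → OracleRecursiveIn g h →
      OracleRecursiveIn g (Nat.unpaired fun a n =>
        n.rec (f a) fun y IH => do {let i ← IH; h (Nat.pair a (Nat.pair y i))})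
  | rfind {f : ℕ →. ℕ} : OracleRecursiveIn g f →
      OracleRecursiveIn g fun a => Nat.rfind fun n => (fun m => m = 0) <$> f (Nat.pair a n)

/-- Turing reducibility between sets of naturals. -/
noncomputable def TuringRed (A B : Set ℕ) : Prop := OracleRecursiveIn (chi B) (chi A)

/-- `A` is `Σ⁰₁(Z)` (i.e. `Z`-c.e.): `A` is the domain of a partial `Z`-computable function. -/
noncomputable def SigmaOneIn (Z A : Set ℕ) : Prop :=
  ∃ f : ℕ →. ℕ, OracleRecursiveIn (chi Z) f ∧ A = f.Dom

/-- `g` dominates `f` if `g n ≥ f n` for every `n`. -/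
def Dominates (g f : ℕ → ℕ) : Prop := ∀ n, f n ≤ g n

/-- `f` is `Z`-hyperimmune: no `Z`-computable function dominates `f`. -/
noncomputable def HyperimmuneIn (Z : Set ℕ) (f : ℕ → ℕ) : Prop :=
  ∀ g : ℕ → ℕ, OracleRecursiveIn (chi Z) g → ¬ Dominates g f

/-- `A` is `Δ⁰₂(G)`: `A` is limit computable relative to `G`. -/
noncomputable def DeltaTwoIn (G A : Set ℕ) : Prop :=
  ∃ h : ℕ → ℕ, OracleRecursiveIn (chi G) h ∧ ∀ x, ∃ s₀, ∀ s ≥ s₀, h (Nat.pair x s) = chi A x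

/-- `A` is c.e. (`Σ⁰₁`). -/
noncomputable def CESet (A : Set ℕ) : Prop := SigmaOneIn ∅ A

/-- `A` is `Δ⁰₂` (limit computable). -/
noncomputable def DeltaTwo (A : Set ℕ) : Prop := DeltaTwoIn ∅ A

/-- `A` is `Z`-immune: `A` is infinite and contains no infinite `Z`-computable subset. -/
noncomputable def ImmuneIn (Z A : Set ℕ) : Prop :=
  A.Infinite ∧ ∀ B : Set ℕ, TuringRed B Z → B.Infinite → ¬ B ⊆ A

/-- `A` is `Z`-hyperimmune as a set: its principal function is `Z`-hyperimmune. -/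
noncomputable def HyperimmuneSetIn (Z A : Set ℕ) : Prop :=
  A.Infinite ∧ HyperimmuneIn Z (Nat.nth (· ∈ A))

/-- Enumeration reducibility, with finite sets coded by binary representation
(`m ∈ D_u ↔ Nat.testBit u m`). -/
noncomputable def EnumRed (B A : Set ℕ) : Prop :=
  ∃ W : Set ℕ, CESet W ∧
    ∀ n, n ∈ B ↔ ∃ u, Nat.pair n u ∈ W ∧ ∀ m, Nat.testBit u m = true → m ∈ A

/-- `B` is cototal: `B ≤ₑ ℕ \ B`. -/
noncomputable def Cototal (B : Set ℕ) : Prop := EnumRed B Bᶜ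

/-- `X` is semi-computable: there is a computable selector function. -/
noncomputable def SemiComputable (X : Set ℕ) : Prop :=
  ∃ g : ℕ → ℕ, OracleRecursiveIn (chi ∅) g ∧
    ∀ x y : ℕ, (g (Nat.pair x y) = x ∨ g (Nat.pair x y) = y) ∧
      ((x ∈ X ∨ y ∈ X) → g (Nat.pair x y) ∈ X)

/-- A problem: a set of instances, and a solution relation between instances and solutions.
Instances and solutions are coded by sets of naturals. -/
structure Problem where
  Inst : Set (Set ℕ)
  Sol : Set ℕ → Set ℕ → Prop

/-- `P` admits preservation of `W`. -/
noncomputable def Preserves (P : Problem) (W : Set (Set ℕ)) : Prop :=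
  ∀ Z ∈ W, ∀ X ∈ P.Inst, TuringRed X Z → ∃ Y, P.Sol X Y ∧ setJoin Z Y ∈ W

/-- `P` admits strong preservation of `W`. -/
noncomputable def StronglyPreserves (P : Problem) (W : Set (Set ℕ)) : Prop :=
  ∀ Z ∈ W, ∀ X ∈ P.Inst, ∃ Y, P.Sol X Y ∧ setJoin Z Y ∈ W

/-- `W` is downward closed under Turing reducibility. -/
noncomputable def DownwardClosed (W : Set (Set ℕ)) : Prop :=
  ∀ X ∈ W, ∀ Y : Set ℕ, TuringRed Y X → Y ∈ W

/-- A Turing ideal: closed under effective join and downward closed under `≤_T`. -/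
noncomputable def TuringIdeal (S : Set (Set ℕ)) : Prop :=
  (∀ X ∈ S, ∀ Y ∈ S, setJoin X Y ∈ S) ∧ DownwardClosed S

/-- `P` holds in `S`: every instance of `P` in `S` has a solution in `S`. -/
def HoldsIn (P : Problem) (S : Set (Set ℕ)) : Prop :=
  ∀ X ∈ P.Inst, X ∈ S → ∃ Y, P.Sol X Y ∧ Y ∈ S

/-- `P` admits avoidance of `k` cones (`k ≤ ω`, with `ω` represented by `⊤ : ℕ∞`). -/
noncomputable def AvoidsCones (P : Problem) (k : ℕ∞) : Prop :=
  ∀ Z : Set ℕ, ∀ B : ℕ → Set ℕ, (∀ s : ℕ, (s : ℕ∞) < k → ¬ TuringRed (B s) Z) →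
    ∀ X ∈ P.Inst, TuringRed X Z →
      ∃ Y, P.Sol X Y ∧ ∀ s : ℕ, (s : ℕ∞) < k → ¬ TuringRed (B s) (setJoin Z Y)

/-- `P` admits non-relativized avoidance of `k` cones. -/
noncomputable def NRAvoidsCones (P : Problem) (k : ℕ∞) : Prop :=
  ∀ B : ℕ → Set ℕ, (∀ s : ℕ, (s : ℕ∞) < k → ¬ TuringRed (B s) ∅) →
    ∀ X ∈ P.Inst, TuringRed X ∅ →
      ∃ Y, P.Sol X Y ∧ ∀ s : ℕ, (s : ℕ∞) < k → ¬ TuringRed (B s) Y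

/-- `P` admits preservation of `k` non-`Σ⁰₁` definitions. -/
noncomputable def PreservesNonSigmaOne (P : Problem) (k : ℕ∞) : Prop :=
  ∀ Z : Set ℕ, ∀ B : ℕ → Set ℕ, (∀ s : ℕ, (s : ℕ∞) < k → ¬ SigmaOneIn Z (B s)) →
    ∀ X ∈ P.Inst, TuringRed X Z →
      ∃ Y, P.Sol X Y ∧ ∀ s : ℕ, (s : ℕ∞) < k → ¬ SigmaOneIn (setJoin Z Y) (B s)

/-- `P` admits preservation of `k` hyperimmunities. -/
noncomputable def PreservesHyperimmunities (P : Problem) (k : ℕ∞) : Prop :=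
  ∀ Z : Set ℕ, ∀ f : ℕ → (ℕ → ℕ), (∀ s : ℕ, (s : ℕ∞) < k → HyperimmuneIn Z (f s)) →
    ∀ X ∈ P.Inst, TuringRed X Z →
      ∃ Y, P.Sol X Y ∧ ∀ s : ℕ, (s : ℕ∞) < k → HyperimmuneIn (setJoin Z Y) (f s)

/-- `P` admits preservation of `k` immunities. -/
noncomputable def PreservesImmunities (P : Problem) (k : ℕ∞) : Prop :=
  ∀ Z : Set ℕ, ∀ B : ℕ → Set ℕ, (∀ s : ℕ, (s : ℕ∞) < k → ImmuneIn Z (B s)) →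
    ∀ X ∈ P.Inst, TuringRed X Z →
      ∃ Y, P.Sol X Y ∧ ∀ s : ℕ, (s : ℕ∞) < k → ImmuneIn (setJoin Z Y) (B s)

/-- Coding a point of Cantor space as a function `ℕ → ℕ`. -/
def boolFun (X : ℕ → Bool) : ℕ → ℕ := fun n => cond (X n) 1 0

/-- `F` is a trace of the closed set `C ⊆ 2^ω`: each `F n` is a set of binary strings of
length `n`, one of which is a prefix of a member of `C`. -/
def IsTrace (C : Set (ℕ → Bool)) (F : ℕ → Finset (List Bool)) : Prop :=
  ∀ n, (∀ σ ∈ F n, σ.length = n) ∧ ∃ σ ∈ F n, ∃ X ∈ C, σ = (List.range n).map X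

/-- `C ⊆ 2^ω` has a `Z`-computable constant-bound trace. -/
noncomputable def HasCBTraceIn (Z : Set ℕ) (C : Set (ℕ → Bool)) : Prop :=
  ∃ (F : ℕ → Finset (List Bool)) (k : ℕ), IsTrace C F ∧ (∀ n, (F n).card = k) ∧
    OracleRecursiveIn (chi Z) (fun n => Encodable.encode (F n) : ℕ → ℕ)

open Classical in
/-- The real `0.B` with binary expansion given by `B`. -/
noncomputable def realOf (B : Set ℕ) : ℝ :=
  ∑' n : ℕ, if n ∈ B then ((2 : ℝ) ^ (n + 1))⁻¹ else 0

/-- A c.e. set of rationals: the image of a c.e. set of naturals under the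
canonical enumeration of `ℚ`. -/
noncomputable def CERatSet (W : Set ℚ) : Prop :=
  ∃ S : Set ℕ, CESet S ∧ W = (fun n => Denumerable.ofNat ℚ n) '' S


/-- If preservation of `W₁` implies preservation of `W₂` (for all problems),
then strong preservation of `W₁` implies strong preservation of `W₂`. -/
theorem stmt1 (W₁ W₂ : Set (Set ℕ)) (hW₁ : DownwardClosed W₁) (hW₂ : DownwardClosed W₂)
    (h : ∀ P : Problem, Preserves P W₁ → Preserves P W₂) :
    ∀ P : Problem, StronglyPreserves P W₁ → StronglyPreserves P W₂ := by
  intro P hP Z hZ X hX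
  have hred : TuringRed ∅ Z := by
    have he : (↑(chi ∅) : ℕ →. ℕ) = pure 0 := by
      funext n; simp [chi]; rfl
    unfold TuringRed
    rw [he]
    exact OracleRecursiveIn.zero
  set Q : Problem := ⟨{∅}, fun _ Y => P.Sol X Y⟩ with hQdef
  have hQ : Preserves Q W₁ := by
    intro Z' hZ' X' _ _
    obtain ⟨Y, hY, hYW⟩ := hP Z' hZ' X hX
    exact ⟨Y, hY, hYW⟩
  obtain ⟨Y, hY, hYW⟩ := h Q hQ Z hZ ∅ rfl hred
  exact ⟨Y, hY, hYW⟩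
end

section
/- Let A ⊆ ℕ be a semi-computable set. Then A is immune if and only if A is hyperimmune (as a set); moreover, if A is immune then A is not c.e. -/
/-! ### Auxiliary machinery for stmt13 -/

theorem recIn_empty_iff {f : ℕ →. ℕ} : OracleRecursiveIn (chi ∅) f ↔ Nat.Partrec f := by
  constructor
  · intro h
    induction h with
    | zero => exact Nat.Partrec.zero
    | succ => exact Nat.Partrec.succ
    | left => exact Nat.Partrec.left
    | right => exact Nat.Partrec.right
    | oracle =>
        have h0 : ((chi (∅ : Set ℕ) : ℕ → ℕ) : ℕ →. ℕ) = pure 0 := by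
          funext n
          simp [chi]
          rfl
        rw [h0]; exact Nat.Partrec.zero
    | pair _ _ ih1 ih2 => exact Nat.Partrec.pair ih1 ih2
    | comp _ _ ih1 ih2 => exact Nat.Partrec.comp ih1 ih2
    | prec _ _ ih1 ih2 => exact Nat.Partrec.prec ih1 ih2
    | rfind _ ih => exact Nat.Partrec.rfind ih
  · intro h
    induction h with
    | zero => exact OracleRecursiveIn.zero
    | succ => exact OracleRecursiveIn.succ
    | left => exact OracleRecursiveIn.left
    | right => exact OracleRecursiveIn.right
    | pair _ _ ih1 ih2 => exact OracleRecursiveIn.pair ih1 ih2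
    | comp _ _ ih1 ih2 => exact OracleRecursiveIn.comp ih1 ih2
    | prec _ _ ih1 ih2 => exact OracleRecursiveIn.prec ih1 ih2
    | rfind _ ih => exact OracleRecursiveIn.rfind ih

theorem recIn_tot_iff {f : ℕ → ℕ} : OracleRecursiveIn (chi ∅) ↑f ↔ Computable f := by
  rw [recIn_empty_iff]
  exact Partrec.nat_iff.symm

theorem computable_nat_find {p : ℕ → ℕ → Bool} (hp : Computable₂ p)
    (hex : ∀ a, ∃ n, p a n = true) :
    Computable fun a => Nat.find (hex a) := by
  have h1 : Partrec fun a => Nat.rfind (fun n => (p a n : Part Bool)) :=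
    Partrec.rfind hp.partrec₂
  apply h1.of_eq_tot
  intro a
  obtain ⟨n, hn, hle⟩ := Nat.rfind_min' (p := fun n => p a n) (Nat.find_spec (hex a))
  have h2 : p a n = true := by simpa using Nat.rfind_spec hn
  have h3 : Nat.find (hex a) ≤ n := Nat.find_min' _ h2
  have h4 : Nat.find (hex a) = n := le_antisymm h3 hle
  rw [h4]; exact hn

/-- The iterated selector over the interval `[lo, lo + k]`. -/
def selUp (s : ℕ → ℕ) (lo k : ℕ) : ℕ :=
  Nat.rec lo (fun j IH => s (Nat.pair (lo + j + 1) IH)) k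

theorem selUp_computable {s : ℕ → ℕ} (hs : Computable s) : Computable₂ (selUp s) := by
  have h : Computable₂ fun (a : ℕ × ℕ) (x : ℕ × ℕ) => s (Nat.pair (a.1 + x.1 + 1) x.2) :=
    ((hs.comp ((Primrec₂.natPair.to_comp).comp
      ((Primrec.succ.to_comp).comp
        ((Primrec.nat_add.to_comp).comp (Computable.fst.comp Computable.fst)
          (Computable.fst.comp Computable.snd)))
      (Computable.snd.comp Computable.snd)))).to₂
  exact (Computable.nat_rec Computable.snd Computable.fst h).to₂

theorem selUp_mem {s : ℕ → ℕ} (hsel : ∀ x y, s (Nat.pair x y) = x ∨ s (Nat.pair x y) = y)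
    (lo k : ℕ) : lo ≤ selUp s lo k ∧ selUp s lo k ≤ lo + k := by
  induction k with
  | zero => simp [selUp]
  | succ j ih =>
      have : selUp s lo (j + 1) = s (Nat.pair (lo + j + 1) (selUp s lo j)) := rfl
      rcases hsel (lo + j + 1) (selUp s lo j) with h | h <;> rw [this, h] <;> omega

theorem selUp_hit {A : Set ℕ} {s : ℕ → ℕ}
    (hsel : ∀ x y, (x ∈ A ∨ y ∈ A) → s (Nat.pair x y) ∈ A)
    {lo k x : ℕ} (h1 : lo ≤ x) (h2 : x ≤ lo + k) (hx : x ∈ A) : selUp s lo k ∈ A := by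
  induction k with
  | zero =>
      have : x = lo := by omega
      subst this; simpa [selUp] using hx
  | succ j ih =>
      show s (Nat.pair (lo + j + 1) (selUp s lo j)) ∈ A
      by_cases h : x = lo + j + 1
      · exact hsel _ _ (Or.inl (h ▸ hx))
      · exact hsel _ _ (Or.inr (ih (by omega)))

/-- An infinite computable strictly increasing sequence inside `A` refutes immunity. -/
theorem not_immune_of_seq {A : Set ℕ} {a : ℕ → ℕ} (ha : Computable a)
    (hmono : StrictMono a) (hmem : ∀ n, a n ∈ A) : ¬ ImmuneIn ∅ A := by
  intro himm
  classical
  set B : Set ℕ := Set.range a with hB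
  set J : ℕ → ℕ := fun x =>
    Nat.rec 0 (fun k IH => if a k = x then 1 else IH) (x + 1) with hJ
  have hJval : ∀ m x, (Nat.rec 0 (fun k IH => if a k = x then 1 else IH) m : ℕ)
      = if ∃ k < m, a k = x then 1 else 0 := by
    intro m x
    induction m with
    | zero => simp
    | succ j ih =>
        show (if a j = x then 1 else Nat.rec 0 (fun k IH => if a k = x then 1 else IH) j)
            = if ∃ k < j + 1, a k = x then 1 else 0
        by_cases h : a j = x
        · rw [if_pos h, if_pos ⟨j, Nat.lt_succ_self j, h⟩]
        · rw [if_neg h, ih]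
          have : (∃ k < j, a k = x) ↔ (∃ k < j + 1, a k = x) := by
            constructor
            · rintro ⟨k, hk, hak⟩; exact ⟨k, by omega, hak⟩
            · rintro ⟨k, hk, hak⟩
              refine ⟨k, ?_, hak⟩
              rcases Nat.lt_succ_iff_lt_or_eq.1 hk with h' | h'
              · exact h'
              · exact absurd (h' ▸ hak) h
          exact if_congr this rfl rfl
  have hmemB : ∀ x, x ∈ B ↔ ∃ k < x + 1, a k = x := by
    intro x
    constructor
    · rintro ⟨k, rfl⟩
      exact ⟨k, Nat.lt_succ_of_le hmono.le_apply, rfl⟩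
    · rintro ⟨k, _, hk⟩; exact ⟨k, hk⟩
  have hchi : chi B = J := by
    funext x
    rw [hJ]
    show chi B x = Nat.rec 0 (fun k IH => if a k = x then 1 else IH) (x + 1)
    rw [hJval (x + 1) x]
    by_cases hx : x ∈ B
    · rw [if_pos ((hmemB x).1 hx)]; simp [chi, hx]
    · have hne : ¬ ∃ k < x + 1, a k = x := fun h => hx ((hmemB x).2 h)
      rw [if_neg hne]; simp [chi, hx]
  have hstepc : Computable₂ fun (x : ℕ) (q : ℕ × ℕ) => if a q.1 = x then 1 else q.2 := by
    have hc : Computable fun z : ℕ × (ℕ × ℕ) => decide (a z.2.1 = z.1) :=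
      (show Computable₂ (fun a b : ℕ => decide (a = b)) from Primrec.eq.decide.to_comp).comp (ha.comp (Computable.fst.comp Computable.snd)) Computable.fst
    have hc' : Computable fun z : ℕ × (ℕ × ℕ) => if a z.2.1 = z.1 then 1 else z.2.2 := by
      have hcond := Computable.cond hc (Computable.const 1)
        (Computable.snd.comp Computable.snd)
      exact hcond.of_eq fun z => by by_cases h : a z.2.1 = z.1 <;> simp [h]
    exact hc'.to₂
  have hJcomp : Computable J :=
    Computable.nat_rec Computable.succ (Computable.const 0) hstepc
  have hBred : TuringRed B ∅ := by
    show OracleRecursiveIn (chi ∅) ↑(chi B)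
    rw [hchi]
    exact recIn_tot_iff.2 hJcomp
  have hBinf : B.Infinite := Set.infinite_range_of_injective hmono.injective
  exact himm.2 B hBred hBinf (by rintro x ⟨k, rfl⟩; exact hmem k)

/-- From a computable strictly expanding "step" into `A`, build a computable strictly
increasing sequence inside `A`. -/
theorem seq_of_step {A : Set ℕ} {step : ℕ → ℕ} (hc : Computable step)
    (h : ∀ p, p < step p ∧ step p ∈ A) :
    ∃ a : ℕ → ℕ, Computable a ∧ StrictMono a ∧ ∀ n, a n ∈ A := by
  refine ⟨fun n => Nat.rec (step 0) (fun _ p => step p) n, ?_, ?_, ?_⟩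
  · exact Computable.nat_rec Computable.id (Computable.const (step 0))
      ((hc.comp (Computable.snd.comp Computable.snd)).to₂)
  · exact strictMono_nat_of_lt_succ fun n => (h _).1
  · intro n
    cases n with
    | zero => exact (h 0).2
    | succ m => exact (h _).2

theorem seq_of_dominated {A : Set ℕ} (hinf : A.Infinite) {s g : ℕ → ℕ}
    (hs : Computable s)
    (hsel1 : ∀ x y, s (Nat.pair x y) = x ∨ s (Nat.pair x y) = y)
    (hsel2 : ∀ x y, (x ∈ A ∨ y ∈ A) → s (Nat.pair x y) ∈ A)
    (hg : Computable g) (hdom : ∀ n, Nat.nth (· ∈ A) n ≤ g n) :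
    ∃ a : ℕ → ℕ, Computable a ∧ StrictMono a ∧ ∀ n, a n ∈ A := by
  have hinf' : (setOf (· ∈ A)).Infinite := by exact hinf
  set step : ℕ → ℕ := fun prev => selUp s (prev + 1) (g (prev + 1) - (prev + 1)) with hstep
  have hstepc : Computable step :=
    (selUp_computable hs).comp Computable.succ
      ((Primrec.nat_sub.to_comp).comp (hg.comp Computable.succ) Computable.succ)
  have hprop : ∀ prev, prev < step prev ∧ step prev ∈ A := by
    intro prev
    have hxA : Nat.nth (· ∈ A) (prev + 1) ∈ A := Nat.nth_mem_of_infinite hinf' (prev + 1)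
    have h1 : prev + 1 ≤ Nat.nth (· ∈ A) (prev + 1) := (Nat.nth_strictMono hinf').le_apply
    have h2 : Nat.nth (· ∈ A) (prev + 1) ≤ g (prev + 1) := hdom (prev + 1)
    constructor
    · show prev < selUp s (prev + 1) (g (prev + 1) - (prev + 1))
      have := (selUp_mem hsel1 (prev + 1) (g (prev + 1) - (prev + 1))).1
      omega
    · show selUp s (prev + 1) (g (prev + 1) - (prev + 1)) ∈ A
      exact selUp_hit hsel2 h1 (by omega) hxA
  exact seq_of_step hstepc hprop

open Nat.Partrec.Code in
theorem seq_of_ce {A : Set ℕ} (hinf : A.Infinite) (hce : CESet A) :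
    ∃ a : ℕ → ℕ, Computable a ∧ StrictMono a ∧ ∀ n, a n ∈ A := by
  obtain ⟨f, hfrec, hfdom⟩ := hce
  have hf : Nat.Partrec f := recIn_empty_iff.1 hfrec
  obtain ⟨c, hc⟩ := exists_code.1 hf
  have hmem : ∀ x : ℕ, x ∈ A ↔ ∃ k, (evaln k c x).isSome := by
    intro x
    rw [hfdom]
    constructor
    · intro hx
      obtain ⟨y, hy⟩ := Part.dom_iff_mem.1 hx
      rw [← hc] at hy
      obtain ⟨k, hk⟩ := evaln_complete.1 hy
      exact ⟨k, Option.isSome_iff_exists.2 ⟨y, hk⟩⟩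
    · rintro ⟨k, hk⟩
      obtain ⟨y, hy⟩ := Option.isSome_iff_exists.1 hk
      have h2 : y ∈ eval c x := evaln_sound hy
      rw [hc] at h2
      exact Part.dom_iff_mem.2 ⟨y, h2⟩
  set q : ℕ → ℕ → Bool := fun prev m =>
    decide (prev < m.unpair.1) && (evaln m.unpair.2 c m.unpair.1).isSome with hq
  have hqc : Computable₂ q := by
    have h1 : Primrec fun z : ℕ × ℕ => evaln z.2.unpair.2 c z.2.unpair.1 :=
      primrec_evaln.comp
        (Primrec.pair
          (Primrec.pair (Primrec.snd.comp (Primrec.unpair.comp Primrec.snd))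
            (Primrec.const c))
          (Primrec.fst.comp (Primrec.unpair.comp Primrec.snd)))
    have h2 : Primrec fun z : ℕ × ℕ => decide (z.1 < z.2.unpair.1) :=
      (show Primrec₂ (fun a b : ℕ => decide (a < b)) from Primrec.nat_lt.decide).comp Primrec.fst (Primrec.fst.comp (Primrec.unpair.comp Primrec.snd))
    exact ((Primrec.and.comp h2 (Primrec.option_isSome.comp h1)).to₂).to_comp
  have hex : ∀ prev, ∃ m, q prev m = true := by
    intro prev
    obtain ⟨x, hxA, hxgt⟩ := hinf.exists_gt prev
    obtain ⟨k, hk⟩ := (hmem x).1 hxA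
    refine ⟨Nat.pair x k, ?_⟩
    rw [hq]
    simp only [Nat.unpair_pair, Bool.and_eq_true, decide_eq_true_eq]
    exact ⟨hxgt, hk⟩
  set step : ℕ → ℕ := fun prev => (Nat.find (hex prev)).unpair.1 with hstep
  have hstepc : Computable step :=
    ((Primrec.fst.comp Primrec.unpair).to_comp).comp (computable_nat_find hqc hex)
  have hprop : ∀ prev, prev < step prev ∧ step prev ∈ A := by
    intro prev
    obtain ⟨h1, h2⟩ := Bool.and_eq_true_iff.mp
      (show (decide (prev < (Nat.find (hex prev)).unpair.1) &&
          (evaln (Nat.find (hex prev)).unpair.2 c (Nat.find (hex prev)).unpair.1).isSome) = true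
        from Nat.find_spec (hex prev))
    exact ⟨of_decide_eq_true h1, (hmem _).2 ⟨_, h2⟩⟩
  exact seq_of_step hstepc hprop

theorem seq_of_subset {B : Set ℕ} (hB : Computable (chi B)) (hinf : B.Infinite) :
    ∃ a : ℕ → ℕ, Computable a ∧ StrictMono a ∧ ∀ n, a n ∈ B := by
  have hchi1 : ∀ x, x ∈ B ↔ chi B x = 1 := by
    intro x
    by_cases h : x ∈ B <;> simp [chi, h]
  set q : ℕ → ℕ → Bool := fun prev x => decide (prev < x) && decide (chi B x = 1) with hq
  have hqc : Computable₂ q := by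
    have h1 : Computable fun z : ℕ × ℕ => decide (z.1 < z.2) :=
      (show Computable₂ (fun a b : ℕ => decide (a < b)) from Primrec.nat_lt.decide.to_comp).comp Computable.fst Computable.snd
    have h2 : Computable fun z : ℕ × ℕ => decide (chi B z.2 = 1) :=
      (show Computable₂ (fun a b : ℕ => decide (a = b)) from Primrec.eq.decide.to_comp).comp (hB.comp Computable.snd) (Computable.const 1)
    exact ((Primrec.and.to_comp).comp h1 h2).to₂
  have hex : ∀ prev, ∃ x, q prev x = true := by
    intro prev
    obtain ⟨x, hxB, hxgt⟩ := hinf.exists_gt prev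
    refine ⟨x, ?_⟩
    rw [hq]
    simp only [Bool.and_eq_true, decide_eq_true_eq]
    exact ⟨hxgt, (hchi1 x).1 hxB⟩
  have hprop : ∀ prev, prev < Nat.find (hex prev) ∧ Nat.find (hex prev) ∈ B := by
    intro prev
    obtain ⟨h1, h2⟩ := Bool.and_eq_true_iff.mp
      (show (decide (prev < Nat.find (hex prev)) &&
          decide (chi B (Nat.find (hex prev)) = 1)) = true
        from Nat.find_spec (hex prev))
    exact ⟨of_decide_eq_true h1, (hchi1 _).2 (of_decide_eq_true h2)⟩
  exact seq_of_step (computable_nat_find hqc hex) hprop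

theorem nth_le_seq {A : Set ℕ} {a : ℕ → ℕ} (hmono : StrictMono a)
    (hmem : ∀ n, a n ∈ A) (n : ℕ) : Nat.nth (· ∈ A) n ≤ a n := by
  classical
  have hcount : n < Nat.count (· ∈ A) (a n + 1) := by
    rw [Nat.count_eq_card_filter_range]
    have hcard : (Finset.range (n + 1)).card ≤
        ((Finset.range (a n + 1)).filter (· ∈ A)).card := by
      apply Finset.card_le_card_of_injOn a
      · intro i hi
        simp only [Finset.mem_coe, Finset.mem_range] at hi
        simp only [Finset.mem_coe, Finset.mem_filter, Finset.mem_range]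
        have := hmono.monotone (Nat.le_of_lt_succ hi)
        exact ⟨by omega, hmem i⟩
      · exact fun i _ j _ h => hmono.injective h
    simpa using hcard
  have := Nat.nth_lt_of_lt_count hcount
  omega


/-- A semi-computable set is immune iff it is hyperimmune;
moreover if it is immune then it is not c.e. -/
theorem stmt13 (A : Set ℕ) (hA : SemiComputable A) :
    (ImmuneIn ∅ A ↔ HyperimmuneSetIn ∅ A) ∧ (ImmuneIn ∅ A → ¬ CESet A) := by
  obtain ⟨s, hsrec, hsprop⟩ := hA
  have hsc : Computable s := recIn_tot_iff.1 hsrec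
  have hsel1 : ∀ x y, s (Nat.pair x y) = x ∨ s (Nat.pair x y) = y := fun x y => (hsprop x y).1
  have hsel2 : ∀ x y, (x ∈ A ∨ y ∈ A) → s (Nat.pair x y) ∈ A := fun x y => (hsprop x y).2
  constructor
  · constructor
    · intro himm
      refine ⟨himm.1, ?_⟩
      intro g hg hdom
      obtain ⟨a, hac, hmono, hmem⟩ :=
        seq_of_dominated himm.1 hsc hsel1 hsel2 (recIn_tot_iff.1 hg) hdom
      exact not_immune_of_seq hac hmono hmem himm
    · intro hhyp
      refine ⟨hhyp.1, ?_⟩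
      intro B hBred hBinf hBsub
      have hBc : Computable (chi B) := recIn_tot_iff.1 hBred
      obtain ⟨a, hac, hmono, hmem⟩ := seq_of_subset hBc hBinf
      exact hhyp.2 a (recIn_tot_iff.2 hac)
        (fun n => nth_le_seq hmono (fun k => hBsub (hmem k)) n)
  · intro himm hce
    obtain ⟨a, hac, hmono, hmem⟩ := seq_of_ce himm.1 hce
    exact not_immune_of_seq hac hmono hmem himm
end
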